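/- For every ε with 0 < ε ≤ 1/3, the middle-ε Cantor set M_ε contains an arithmetic progression of length 4: there exists t > 0 such that 1/2 − 3t, 1/2 − t, 1/2 + t, and 1/2 + 3t all belong to M_ε. -/

import Mathlib

/-- The middle-`ε` Cantor set. -/
noncomputable def middleCantor (ε : ℝ) : Set ℝ :=
  {x | ∃ b : ℕ → Bool,
    x = (1 - (1 - ε) / 2) * ∑' n : ℕ, (if b n then ((1 - ε) / 2) ^ n else 0)}

open Classical

/-! Auxiliary machinery: greedy digit expansion. -/

/-- Choose the digit (pair of bits) for the greedy expansion. The digit value is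
`(if p.1 then 1 else 0) - 3*l*(if p.2 then 1 else 0)`. -/
noncomputable def cbits (l r : ℝ) : Bool × Bool :=
  if 1 ≤ r + 3*l^2/(1-l) then (true, false)
  else if 0 ≤ r + 3*l^2/(1-l) then (false, false)
  else if 1 - 3*l ≤ r + 3*l^2/(1-l) then (true, true)
  else (false, true)

noncomputable def cdval (l : ℝ) (p : Bool × Bool) : ℝ :=
  (if p.1 then (1:ℝ) else 0) - 3*l*(if p.2 then (1:ℝ) else 0)

noncomputable def crseq (l : ℝ) : ℕ → ℝ
  | 0 => -(1/(1-l))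
  | n+1 => (crseq l n - cdval l (cbits l (crseq l n))) / l

set_option maxHeartbeats 1000000 in
lemma cstep_bounds (l : ℝ) (hl : 1/3 ≤ l) (hl2 : l < 1/2) (r : ℝ)
    (h1 : -3*l/(1-l) ≤ r) (h2 : r ≤ 1/(1-l)) :
    l * (-3*l/(1-l)) ≤ r - cdval l (cbits l r) ∧
      r - cdval l (cbits l r) ≤ l * (1/(1-l)) := by
  have hl0 : (0:ℝ) < 1 - l := by linarith
  set s := 1/(1-l) with hsdef
  have hs0 : (0:ℝ) < s := by rw [hsdef]; positivity
  have hs' : s - l*s = 1 := by rw [hsdef]; field_simp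
  have hA : -3*l/(1-l) = -3*l*s := by rw [hsdef]; ring
  have hq : 3*l^2/(1-l) = 3*l^2*s := by rw [hsdef]; ring
  have hls : l*s - l^2*s = l := by linear_combination l * hs'
  have hbig : (0:ℝ) ≤ 2*(l*s) + 3*(l^2*s) - s := by
    nlinarith [mul_nonneg hs0.le (show (0:ℝ) ≤ 2*l+3*l^2-1 by nlinarith)]
  have hpos6 : (0:ℝ) ≤ 6*l^2 - 3*l + 1 := by nlinarith [sq_nonneg (l - 1/4)]
  have h6 : (0:ℝ) ≤ 6*(l^2*s) - 3*(l*s) + s := by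
    nlinarith [mul_nonneg hs0.le hpos6]
  have h7 : (0:ℝ) ≤ l*s - s/3 := by
    nlinarith [mul_nonneg hs0.le (show (0:ℝ) ≤ l - 1/3 by linarith)]
  rw [hA] at h1 ⊢
  unfold cbits
  rw [hq]
  split_ifs with h3 h4 h5 <;>
    simp only [cdval, if_true, if_false, Bool.false_eq_true] <;> norm_num <;>
    constructor <;>
    nlinarith [hs', hls, hbig, h6, h7, hs0, hl, hl2, h1, h2]


lemma crseq_mem (l : ℝ) (hl : 1/3 ≤ l) (hl2 : l < 1/2) :
    ∀ n, -3*l/(1-l) ≤ crseq l n ∧ crseq l n ≤ 1/(1-l) := by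
  have hl0 : (0:ℝ) < 1 - l := by linarith
  have hlpos : (0:ℝ) < l := by linarith
  intro n
  induction n with
  | zero =>
      have hs : (1-l) * (1/(1-l)) = 1 := by field_simp
      have hs0 : (0:ℝ) < 1/(1-l) := by positivity
      constructor
      · show -3*l/(1-l) ≤ -(1/(1-l))
        rw [div_le_iff₀ hl0]
        nlinarith [hs, hs0]
      · show -(1/(1-l)) ≤ 1/(1-l)
        linarith
  | succ n ih =>
      obtain ⟨hL, hR⟩ := cstep_bounds l hl hl2 (crseq l n) ih.1 ih.2
      constructor
      · show -3*l/(1-l) ≤ (crseq l n - cdval l (cbits l (crseq l n))) / l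
        rw [le_div_iff₀ hlpos]
        nlinarith [hL]
      · show (crseq l n - cdval l (cbits l (crseq l n))) / l ≤ 1/(1-l)
        rw [div_le_iff₀ hlpos]
        nlinarith [hR]

lemma crseq_partial (l : ℝ) (hlpos : 0 < l) :
    ∀ n, (∑ k ∈ Finset.range n, cdval l (cbits l (crseq l k)) * l^k)
      = -(1/(1-l)) - l^n * crseq l n := by
  intro n
  induction n with
  | zero => simp [crseq]
  | succ n ih =>
      rw [Finset.sum_range_succ, ih]
      have h : crseq l (n+1) = (crseq l n - cdval l (cbits l (crseq l n))) / l := rfl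
      rw [h]
      field_simp
      ring

/-! Generic sum lemmas for boolean-indexed geometric sums. -/

lemma bsummable (l : ℝ) (h0 : 0 ≤ l) (h1 : l < 1) (b : ℕ → Bool) :
    Summable (fun n => if b n then l^n else 0) := by
  refine Summable.of_nonneg_of_le (fun n => ?_) (fun n => ?_)
    (summable_geometric_of_lt_one h0 h1)
  · split
    · positivity
    · exact le_rfl
  · split
    · exact le_rfl
    · positivity

lemma btsum_le (l : ℝ) (h0 : 0 ≤ l) (h1 : l < 1) (b : ℕ → Bool) :
    (∑' n, if b n then l^n else 0) ≤ 1/(1-l) := by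
  have h := Summable.tsum_le_tsum (f := fun n => if b n then l^n else 0) (g := fun n => l^n)
    (fun n => by show (if b n then l^n else 0) ≤ l^n; split <;> first | exact le_rfl | positivity)
    (bsummable l h0 h1 b) (summable_geometric_of_lt_one h0 h1)
  rwa [tsum_geometric_of_lt_one h0 h1, ← one_div] at h

lemma btsum_compl (l : ℝ) (h0 : 0 ≤ l) (h1 : l < 1) (b : ℕ → Bool) :
    (∑' n, if (!(b n)) then l^n else 0) = 1/(1-l) - ∑' n, if b n then l^n else 0 := by
  have key : ∀ n, (if (!(b n)) then l^n else 0) = l^n - (if b n then l^n else 0) := by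
    intro n; cases hb : b n <;> simp
  rw [tsum_congr key, Summable.tsum_sub (summable_geometric_of_lt_one h0 h1) (bsummable l h0 h1 b),
    tsum_geometric_of_lt_one h0 h1, one_div]

def shiftBool (b : ℕ → Bool) : ℕ → Bool
  | 0 => false
  | n+1 => b n

lemma btsum_shift (l : ℝ) (h0 : 0 ≤ l) (h1 : l < 1) (b : ℕ → Bool) :
    (∑' n, if shiftBool b n then l^n else 0) = l * ∑' n, if b n then l^n else 0 := by
  rw [Summable.tsum_eq_zero_add (bsummable l h0 h1 (shiftBool b))]
  have key : ∀ n : ℕ, (if shiftBool b (n+1) then l^(n+1) else 0)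
      = l * (if b n then l^n else 0) := by
    intro n
    show (if b n then l^(n+1) else 0) = _
    cases hb : b n
    · simp
    · simp [pow_succ]; ring
  rw [tsum_congr key, tsum_mul_left]
  simp [shiftBool]

/-- The key representation: for `1/3 ≤ l < 1/2` there are bit sequences `u`, `v` with
`V = 3 l U - 1/(1-l)`. -/
lemma key_rep (l : ℝ) (hl : 1/3 ≤ l) (hl2 : l < 1/2) :
    ∃ u v : ℕ → Bool,
      (∑' n, if v n then l^n else 0) = 3*l*(∑' n, if u n then l^n else 0) - 1/(1-l) := by
  have hlpos : (0:ℝ) < l := by linarith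
  have hl1 : l < 1 := by linarith
  have hl0 : (0:ℝ) < 1 - l := by linarith
  refine ⟨fun n => (cbits l (crseq l n)).2, fun n => (cbits l (crseq l n)).1, ?_⟩
  set fv : ℕ → ℝ := fun n => if (cbits l (crseq l n)).1 then l^n else 0 with hfv
  set fu : ℕ → ℝ := fun n => if (cbits l (crseq l n)).2 then l^n else 0 with hfu
  have hsv : Summable fv := bsummable l hlpos.le hl1 _
  have hsu : Summable fu := bsummable l hlpos.le hl1 _
  have hdecomp : ∀ n, cdval l (cbits l (crseq l n)) * l^n = fv n - 3*l * fu n := by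
    intro n
    simp only [hfv, hfu, cdval]
    rcases cbits l (crseq l n) with ⟨b1, b2⟩
    cases b1 <;> cases b2 <;> simp <;> ring
  have hfe : (fun n => cdval l (cbits l (crseq l n)) * l^n)
      = fun n => fv n - 3*l * fu n := funext hdecomp
  have hsum : Summable (fun n => cdval l (cbits l (crseq l n)) * l^n) := by
    rw [hfe]; exact hsv.sub (hsu.mul_left _)
  have hbound : ∀ n, |crseq l n| ≤ 3/(1-l) := by
    intro n
    obtain ⟨hL, hR⟩ := crseq_mem l hl hl2 n
    rw [abs_le]
    constructor
    · have h3 : -(3/(1-l)) ≤ -3*l/(1-l) := by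
        have he : -(3/(1-l)) = (-3)/(1-l) := by ring
        rw [he, div_le_div_iff₀ hl0 hl0]
        nlinarith
      linarith
    · have h4 : 1/(1-l) ≤ 3/(1-l) := by gcongr <;> norm_num
      linarith
  have h2 : Filter.Tendsto (fun n : ℕ => l^n * crseq l n) Filter.atTop (nhds 0) := by
    have hgeo : Filter.Tendsto (fun n : ℕ => (3/(1-l)) * l^n) Filter.atTop (nhds 0) := by
      have hp := tendsto_pow_atTop_nhds_zero_of_lt_one hlpos.le hl1
      simpa using hp.const_mul (3/(1-l))
    apply squeeze_zero_norm ?_ hgeo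
    intro n
    have he : ‖l^n * crseq l n‖ = l^n * |crseq l n| := by
      rw [norm_mul, Real.norm_eq_abs, Real.norm_eq_abs, abs_pow, abs_of_nonneg hlpos.le]
    rw [he]
    calc l^n * |crseq l n| ≤ l^n * (3/(1-l)) :=
          mul_le_mul_of_nonneg_left (hbound n) (by positivity)
      _ = 3/(1-l) * l^n := by ring
  have htend : Filter.Tendsto
      (fun n => ∑ k ∈ Finset.range n, cdval l (cbits l (crseq l k)) * l^k)
      Filter.atTop (nhds (-(1/(1-l)))) := by
    have h3 := h2.const_sub (-(1/(1-l)))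
    rw [sub_zero] at h3
    exact h3.congr (fun n => (crseq_partial l hlpos n).symm)
  have hhs : HasSum (fun n => cdval l (cbits l (crseq l n)) * l^n) (-(1/(1-l))) :=
    (hsum.hasSum_iff_tendsto_nat).2 htend
  have hhs' : HasSum (fun n => fv n - 3*l * fu n) (-(1/(1-l))) := hfe ▸ hhs
  have hhs2 : HasSum (fun n => fv n - 3*l * fu n)
      ((∑' n, fv n) - 3*l * (∑' n, fu n)) :=
    hsv.hasSum.sub ((hsu.hasSum).mul_left (3*l))
  have hfin : (∑' n, fv n) - 3*l * (∑' n, fu n) = -(1/(1-l)) := hhs2.unique hhs'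
  linarith [hfin]

theorem stmt17 (ε : ℝ) (h1 : 0 < ε) (h2 : ε ≤ 1 / 3) :
    ∃ t : ℝ, 0 < t ∧ 1 / 2 - 3 * t ∈ middleCantor ε ∧ 1 / 2 - t ∈ middleCantor ε ∧
      1 / 2 + t ∈ middleCantor ε ∧ 1 / 2 + 3 * t ∈ middleCantor ε := by
  set l : ℝ := (1 - ε) / 2 with hldef
  have hl : 1/3 ≤ l := by rw [hldef]; linarith
  have hl2 : l < 1/2 := by rw [hldef]; linarith
  have hlpos : (0:ℝ) < l := by linarith
  have hl1 : l < 1 := by linarith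
  have hl0 : (0:ℝ) < 1 - l := by linarith
  have hone : (1 - l) * (1/(1-l)) = 1 := by field_simp
  obtain ⟨u, v, hkey⟩ := key_rep l hl hl2
  set U : ℝ := ∑' n, if u n then l^n else 0 with hUdef
  set V : ℝ := ∑' n, if v n then l^n else 0 with hVdef
  have hU : U ≤ 1/(1-l) := btsum_le l hlpos.le hl1 u
  have hshift : (∑' n, if shiftBool u n then l^n else 0) = l * U :=
    btsum_shift l hlpos.le hl1 u
  have hcomplU : (∑' n, if (!(shiftBool u n)) then l^n else 0) = 1/(1-l) - l * U := by
    rw [btsum_compl l hlpos.le hl1 (shiftBool u), hshift]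
  have hcomplV : (∑' n, if (!(v n)) then l^n else 0) = 1/(1-l) - V :=
    btsum_compl l hlpos.le hl1 v
  refine ⟨1/2 - (1-l)*l*U, ?_, ⟨v, ?_⟩, ⟨shiftBool u, ?_⟩,
    ⟨fun n => !(shiftBool u n), ?_⟩, ⟨fun n => !(v n), ?_⟩⟩
  · have hub : (1-l)*l*U ≤ (1-l)*l*(1/(1-l)) :=
      mul_le_mul_of_nonneg_left hU (by positivity)
    have h5 : (1-l)*l*(1/(1-l)) = l := by field_simp
    linarith
  · rw [← hldef, ← hVdef]
    linear_combination (-(1-l)) * hkey + hone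
  · rw [← hldef, hshift]
    ring
  · rw [← hldef, hcomplU]
    linear_combination -hone
  · rw [← hldef, hcomplV]
    linear_combination (1-l) * hkey - 2 * hone
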